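/- arXiv:1010.0512 — 5 statements merged into one kernel-verified Lean document; each statement's English description precedes it below -/
import Mathlib

section
/- The three-dimensional analogue of the bond-density lemma fails: for the tetrahedron T with vertices (1,0,0), (0,1,0), (0,0,1), (0,1,1) and bond direction r = (1,0,0), the sum over i ∈ ℤ³ of the bond averages ⨍_{(i,i+r)} χ_T db equals 0, whereas the volume of T is 1/6. -/
open MeasureTheory Filter

/-- Embedding of the lattice `ℤ³` into `ℝ³`. -/
noncomputable def c3 (i : ℤ × ℤ × ℤ) : ℝ × ℝ × ℝ := ((i.1 : ℝ), (i.2.1 : ℝ), (i.2.2 : ℝ))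

/-- The tetrahedron as an intersection of four half-spaces. -/
def Tineq : Set (ℝ × ℝ × ℝ) :=
  {p | 0 ≤ p.1 ∧ 1 ≤ p.1 + p.2.1 + p.2.2 ∧ p.1 + p.2.1 ≤ 1 ∧ p.1 + p.2.2 ≤ 1}

lemma convex_Tineq : Convex ℝ Tineq := by
  intro p hp q hq a b ha hb hab
  obtain ⟨h1, h2, h3, h4⟩ := hp
  obtain ⟨g1, g2, g3, g4⟩ := hq
  refine ⟨?_, ?_, ?_, ?_⟩ <;>
    simp only [Prod.fst_add, Prod.snd_add, Prod.smul_fst, Prod.smul_snd, smul_eq_mul] <;>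
    nlinarith

lemma hull_eq :
    convexHull ℝ ({((1:ℝ), (0:ℝ), (0:ℝ)), ((0:ℝ), (1:ℝ), (0:ℝ)), ((0:ℝ), (0:ℝ), (1:ℝ)),
      ((0:ℝ), (1:ℝ), (1:ℝ))} : Set (ℝ × ℝ × ℝ)) = Tineq := by
  apply Set.Subset.antisymm
  · apply convexHull_min _ convex_Tineq
    intro p hp
    simp only [Set.mem_insert_iff, Set.mem_singleton_iff] at hp
    rcases hp with rfl | rfl | rfl | rfl <;> norm_num [Tineq]
  · intro p hp
    obtain ⟨h1, h2, h3, h4⟩ := hp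
    have key : p = ∑ j : Fin 4,
        (![p.1, 1 - p.1 - p.2.2, 1 - p.1 - p.2.1, p.1 + p.2.1 + p.2.2 - 1] j) •
        (![((1:ℝ), (0:ℝ), (0:ℝ)), ((0:ℝ), (1:ℝ), (0:ℝ)), ((0:ℝ), (0:ℝ), (1:ℝ)),
          ((0:ℝ), (1:ℝ), (1:ℝ))] j) := by
      rw [Fin.sum_univ_four]
      refine Prod.ext ?_ (Prod.ext ?_ ?_) <;>
        simp [Prod.fst_add, Prod.snd_add, Prod.smul_fst, Prod.smul_snd, smul_eq_mul] <;> ring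
    rw [key]
    have hc := convex_convexHull ℝ ({((1:ℝ), (0:ℝ), (0:ℝ)), ((0:ℝ), (1:ℝ), (0:ℝ)),
      ((0:ℝ), (0:ℝ), (1:ℝ)), ((0:ℝ), (1:ℝ), (1:ℝ))} : Set (ℝ × ℝ × ℝ))
    refine hc.sum_mem (fun i _ => ?_) (by rw [Fin.sum_univ_four]; simp; ring) (fun i _ => ?_)
    · fin_cases i <;> simp <;> linarith
    · fin_cases i <;> exact subset_convexHull ℝ _ (by simp)

lemma closed_Tineq : IsClosed Tineq := by
  have h1 : IsClosed {p : ℝ × ℝ × ℝ | 0 ≤ p.1} := isClosed_le continuous_const continuous_fst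
  have h2 : IsClosed {p : ℝ × ℝ × ℝ | 1 ≤ p.1 + p.2.1 + p.2.2} :=
    isClosed_le continuous_const (by fun_prop)
  have h3 : IsClosed {p : ℝ × ℝ × ℝ | p.1 + p.2.1 ≤ 1} := isClosed_le (by fun_prop) continuous_const
  have h4 : IsClosed {p : ℝ × ℝ × ℝ | p.1 + p.2.2 ≤ 1} := isClosed_le (by fun_prop) continuous_const
  have : Tineq = {p : ℝ × ℝ × ℝ | 0 ≤ p.1} ∩ ({p | 1 ≤ p.1 + p.2.1 + p.2.2} ∩
      ({p | p.1 + p.2.1 ≤ 1} ∩ {p | p.1 + p.2.2 ≤ 1})) := by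
    ext p; simp [Tineq, and_assoc]
  rw [this]
  exact h1.inter (h2.inter (h3.inter h4))

lemma meas_Tineq : MeasurableSet Tineq := closed_Tineq.measurableSet

lemma J_nonpos {t : ℝ} (ht : t ≤ 0) : ∫⁻ y in Set.Iic t, ENNReal.ofReal y = 0 := by
  calc ∫⁻ y in Set.Iic t, ENNReal.ofReal y
      = ∫⁻ _ in Set.Iic t, 0 := setLIntegral_congr_fun measurableSet_Iic
        (fun y (hy : y ∈ Set.Iic t) =>
          ENNReal.ofReal_eq_zero.2 (le_trans hy ht))
    _ = 0 := lintegral_zero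

lemma J_nonneg {t : ℝ} (ht : 0 ≤ t) :
    ∫⁻ y in Set.Iic t, ENNReal.ofReal y = ENNReal.ofReal (t ^ 2 / 2) := by
  have hsplit : Set.Iic t = Set.Iic 0 ∪ Set.Ioc 0 t := (Set.Iic_union_Ioc_eq_Iic ht).symm
  rw [hsplit, lintegral_union measurableSet_Ioc (Set.Iic_disjoint_Ioc le_rfl), J_nonpos le_rfl,
    zero_add]
  have hint : IntegrableOn (fun y : ℝ => y) (Set.Ioc 0 t) := continuous_id.integrableOn_Ioc
  rw [← ofReal_integral_eq_lintegral_ofReal hint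
    ((ae_restrict_mem measurableSet_Ioc).mono fun y hy => hy.1.le)]
  congr 1
  rw [← intervalIntegral.integral_of_le ht, integral_id]
  ring

lemma slice_vol (x : ℝ) :
    (volume : Measure (ℝ × ℝ)) (Prod.mk x ⁻¹' Tineq)
      = Set.indicator (Set.Icc (0:ℝ) 1) (fun u => ENNReal.ofReal ((1 - u) ^ 2 / 2)) x := by
  by_cases hx0 : 0 ≤ x
  · have hmeas2 : MeasurableSet (Prod.mk x ⁻¹' Tineq) := measurable_prodMk_left meas_Tineq
    rw [Measure.volume_eq_prod, Measure.prod_apply hmeas2]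
    have hinner : ∀ y : ℝ, (volume : Measure ℝ) (Prod.mk y ⁻¹' (Prod.mk x ⁻¹' Tineq))
        = Set.indicator (Set.Iic (1 - x)) ENNReal.ofReal y := by
      intro y
      by_cases hy : y ≤ 1 - x
      · have hset : Prod.mk y ⁻¹' (Prod.mk x ⁻¹' Tineq) = Set.Icc (1 - x - y) (1 - x) := by
          ext z
          simp only [Set.mem_preimage, Tineq, Set.mem_setOf_eq, Set.mem_Icc]
          constructor
          · rintro ⟨-, h2, -, h4⟩; constructor <;> linarith
          · rintro ⟨hz1, hz2⟩; exact ⟨hx0, by linarith, by linarith, by linarith⟩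
        rw [hset, Real.volume_Icc, Set.indicator_of_mem (Set.mem_Iic.mpr hy) ENNReal.ofReal]
        congr 1; ring
      · have hset : Prod.mk y ⁻¹' (Prod.mk x ⁻¹' Tineq) = ∅ := by
          ext z
          simp only [Set.mem_preimage, Tineq, Set.mem_setOf_eq, Set.mem_empty_iff_false,
            iff_false, not_and]
          intro _ _ h3
          exact absurd (by linarith : y ≤ 1 - x) hy
        rw [hset, Set.indicator_of_notMem (fun h => hy (Set.mem_Iic.mp h)) ENNReal.ofReal]
        simp
    rw [lintegral_congr hinner, lintegral_indicator measurableSet_Iic]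
    by_cases hx1 : x ≤ 1
    · rw [J_nonneg (by linarith), Set.indicator_of_mem (Set.mem_Icc.2 ⟨hx0, hx1⟩)]
    · rw [J_nonpos (by linarith), Set.indicator_of_notMem (by
        simp only [Set.mem_Icc, not_and]; intro _; linarith)]
  · have hset : Prod.mk x ⁻¹' Tineq = ∅ := by
      ext q
      simp only [Set.mem_preimage, Tineq, Set.mem_setOf_eq, Set.mem_empty_iff_false, iff_false,
        not_and]
      intro h; exact absurd h hx0
    rw [hset, Set.indicator_of_notMem
      (by simp only [Set.mem_Icc, not_and]; intro h; exact absurd h hx0)]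
    simp

lemma volume_Tineq : (volume : Measure (ℝ × ℝ × ℝ)) Tineq = ENNReal.ofReal (1 / 6) := by
  rw [Measure.volume_eq_prod, Measure.prod_apply meas_Tineq, lintegral_congr slice_vol,
    lintegral_indicator measurableSet_Icc]
  have hint : IntegrableOn (fun x : ℝ => (1 - x) ^ 2 / 2) (Set.Icc 0 1) :=
    (by continuity : Continuous fun x : ℝ => (1 - x) ^ 2 / 2).integrableOn_Icc
  rw [← ofReal_integral_eq_lintegral_ofReal hint (ae_of_all _ fun x => by positivity)]
  congr 1
  rw [MeasureTheory.integral_Icc_eq_integral_Ioc, ← intervalIntegral.integral_of_le zero_le_one]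
  have := intervalIntegral.integral_comp_sub_left (a := 0) (b := 1) (fun u : ℝ => u ^ 2 / 2) 1
  rw [this]
  norm_num [intervalIntegral.integral_div, integral_pow]

lemma chi_zero_outside {T : Set (ℝ × ℝ × ℝ)} (hcl : IsClosed T) {χ : ℝ × ℝ × ℝ → ℝ}
    (hχ : ∀ x : ℝ × ℝ × ℝ,
      Tendsto (fun ρ : ℝ =>
          (volume (T ∩ Metric.ball x ρ)).toReal / (volume (Metric.ball x ρ)).toReal)
        (nhdsWithin 0 (Set.Ioi (0:ℝ))) (nhds (χ x)))
    {x : ℝ × ℝ × ℝ} (hx : x ∉ T) : χ x = 0 := by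
  obtain ⟨ε, hε, hball⟩ := Metric.isOpen_iff.1 hcl.isOpen_compl x hx
  have hev : ∀ᶠ ρ in nhdsWithin 0 (Set.Ioi (0:ℝ)),
      (volume (T ∩ Metric.ball x ρ)).toReal / (volume (Metric.ball x ρ)).toReal = 0 := by
    filter_upwards [Ioo_mem_nhdsGT_of_mem (Set.mem_Ico.2 ⟨le_rfl, hε⟩)] with ρ hρ
    have : T ∩ Metric.ball x ρ = ∅ := by
      apply Set.eq_empty_of_forall_notMem
      rintro y ⟨hyT, hyB⟩
      exact hball (Metric.ball_subset_ball hρ.2.le hyB) hyT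
    simp [this]
  have h2 : Tendsto (fun ρ : ℝ =>
      (volume (T ∩ Metric.ball x ρ)).toReal / (volume (Metric.ball x ρ)).toReal)
      (nhdsWithin 0 (Set.Ioi (0:ℝ))) (nhds 0) := by
    rw [tendsto_congr' hev]; exact tendsto_const_nhds
  exact tendsto_nhds_unique (hχ x) h2

lemma line_unique {m n : ℤ} {a a' : ℝ}
    (H : (0:ℝ) ≤ a ∧ 1 ≤ a + (m:ℝ) + (n:ℝ) ∧ a + (m:ℝ) ≤ 1 ∧ a + (n:ℝ) ≤ 1)
    (H' : (0:ℝ) ≤ a' ∧ 1 ≤ a' + (m:ℝ) + (n:ℝ) ∧ a' + (m:ℝ) ≤ 1 ∧ a' + (n:ℝ) ≤ 1) :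
    a = a' := by
  obtain ⟨h1, h2, h3, h4⟩ := H
  obtain ⟨g1, g2, g3, g4⟩ := H'
  have hm0 : (0:ℤ) ≤ m := by exact_mod_cast (by linarith : (0:ℝ) ≤ (m:ℝ))
  have hm1 : (m:ℤ) ≤ 1 := by exact_mod_cast (by linarith : ((m:ℝ)) ≤ 1)
  have hn0 : (0:ℤ) ≤ n := by exact_mod_cast (by linarith : (0:ℝ) ≤ (n:ℝ))
  have hn1 : (n:ℤ) ≤ 1 := by exact_mod_cast (by linarith : ((n:ℝ)) ≤ 1)
  have hm : m = 0 ∨ m = 1 := by omega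
  have hn : n = 0 ∨ n = 1 := by omega
  rcases hm with rfl | rfl <;> rcases hn with rfl | rfl <;>
    simp only [Int.cast_zero, Int.cast_one] at * <;> linarith

/-- Failure of the bond-density lemma in three dimensions: for the tetrahedron `T` with
vertices `(1,0,0)`, `(0,1,0)`, `(0,0,1)`, `(0,1,1)`, bond direction `r = (1,0,0)`, and the
density function `χ x = lim_{ρ→0} |T ∩ B_ρ(x)|/|B_ρ(x)|` (assumed to exist for every `x`),
the sum over `i ∈ ℤ³` of the bond averages `⨍_{(i,i+r)} χ db` equals `0`, whereas the
volume of `T` equals `1/6`. -/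
theorem bond_density_3d_fails
    (T : Set (ℝ × ℝ × ℝ))
    (hT : T = convexHull ℝ
      {((1:ℝ), (0:ℝ), (0:ℝ)), ((0:ℝ), (1:ℝ), (0:ℝ)), ((0:ℝ), (0:ℝ), (1:ℝ)),
        ((0:ℝ), (1:ℝ), (1:ℝ))})
    (χ : ℝ × ℝ × ℝ → ℝ)
    (hχ : ∀ x : ℝ × ℝ × ℝ,
      Tendsto (fun ρ : ℝ =>
          (volume (T ∩ Metric.ball x ρ)).toReal / (volume (Metric.ball x ρ)).toReal)
        (nhdsWithin 0 (Set.Ioi (0:ℝ))) (nhds (χ x))) :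
    (∑' i : ℤ × ℤ × ℤ,
        ∫ l in (0:ℝ)..1, χ ((1 - l) • c3 i + l • c3 (i + ((1:ℤ), (0:ℤ), (0:ℤ))))) = 0
      ∧ (volume T).toReal = 1 / 6 := by
  have hTe : T = Tineq := by rw [hT, hull_eq]
  have hcl : IsClosed T := hTe ▸ closed_Tineq
  constructor
  · have hzero : ∀ i : ℤ × ℤ × ℤ,
        (∫ l in (0:ℝ)..1, χ ((1 - l) • c3 i + l • c3 (i + ((1:ℤ), (0:ℤ), (0:ℤ))))) = 0 := by
      intro i
      have hpt : ∀ l : ℝ, (1 - l) • c3 i + l • c3 (i + ((1:ℤ), (0:ℤ), (0:ℤ)))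
          = ((i.1 : ℝ) + l, (i.2.1 : ℝ), (i.2.2 : ℝ)) := by
        intro l
        have h1 : (i + ((1:ℤ), (0:ℤ), (0:ℤ))).1 = i.1 + 1 := rfl
        have h2 : (i + ((1:ℤ), (0:ℤ), (0:ℤ))).2.1 = i.2.1 := by
          simp [Prod.snd_add]
        have h3 : (i + ((1:ℤ), (0:ℤ), (0:ℤ))).2.2 = i.2.2 := by
          simp [Prod.snd_add]
        simp only [c3, h1, h2, h3]
        refine Prod.ext ?_ (Prod.ext ?_ ?_) <;>
          simp only [Prod.fst_add, Prod.snd_add, Prod.smul_fst, Prod.smul_snd, smul_eq_mul] <;>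
          push_cast <;> ring
      have hsub : {l : ℝ | ((i.1 : ℝ) + l, (i.2.1 : ℝ), (i.2.2 : ℝ)) ∈ T}.Subsingleton := by
        intro l hl l' hl'
        rw [Set.mem_setOf_eq, hTe] at hl hl'
        exact add_left_cancel
          (show (i.1:ℝ) + l = (i.1:ℝ) + l' from line_unique (m := i.2.1) (n := i.2.2) hl hl')
      have h0 : volume {l : ℝ | ((i.1 : ℝ) + l, (i.2.1 : ℝ), (i.2.2 : ℝ)) ∈ T} = 0 :=
        hsub.measure_zero volume
      have hae : ∀ᵐ l : ℝ, χ ((1 - l) • c3 i + l • c3 (i + ((1:ℤ), (0:ℤ), (0:ℤ)))) = 0 := by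
        filter_upwards [measure_eq_zero_iff_ae_notMem.1 h0] with l hl
        rw [hpt l]
        exact chi_zero_outside hcl hχ hl
      calc (∫ l in (0:ℝ)..1, χ ((1 - l) • c3 i + l • c3 (i + ((1:ℤ), (0:ℤ), (0:ℤ)))))
          = ∫ _ in (0:ℝ)..1, (0:ℝ) :=
            intervalIntegral.integral_congr_ae (hae.mono fun l h _ => h)
        _ = 0 := intervalIntegral.integral_zero
    calc (∑' i : ℤ × ℤ × ℤ,
          ∫ l in (0:ℝ)..1, χ ((1 - l) • c3 i + l • c3 (i + ((1:ℤ), (0:ℤ), (0:ℤ)))))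
        = ∑' _ : ℤ × ℤ × ℤ, (0:ℝ) := tsum_congr hzero
      _ = 0 := tsum_zero
  · rw [hTe, volume_Tineq, ENNReal.toReal_ofReal (by norm_num)]
end

section
/- For any triangle T in ℝ² with lattice vertices and any integer m ≥ 1, the scaled triangle mT can be partitioned (up to null sets) into m² triangles, each of which is obtained from T by a translation by a vector in ℤ² and possibly a point reflection about a point of ℤ². -/
open MeasureTheory Set
open scoped symmDiff

/-- Embedding of the lattice `ℤ²` into `ℝ²`. -/
noncomputable def c2 (i : ℤ × ℤ) : ℝ × ℝ := ((i.1 : ℝ), (i.2 : ℝ))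


/-- Upward lattice triangle. -/
def upT (i j : ℕ) : Set (ℝ × ℝ) :=
  {x | (i : ℝ) ≤ x.1 ∧ (j : ℝ) ≤ x.2 ∧ x.1 + x.2 ≤ (i : ℝ) + j + 1}

/-- Downward lattice triangle. -/
def dnT (i j : ℕ) : Set (ℝ × ℝ) :=
  {x | x.1 ≤ (i : ℝ) + 1 ∧ x.2 ≤ (j : ℝ) + 1 ∧ (i : ℝ) + j + 1 ≤ x.1 + x.2}

lemma interior_le_set (f : (ℝ × ℝ) →L[ℝ] ℝ) (hf : f ≠ 0) (a : ℝ) :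
    interior {x | f x ≤ a} = {x | f x < a} := by
  have h1 : {x : ℝ × ℝ | f x ≤ a} = f ⁻¹' Iic a := rfl
  rw [h1, ← (ContinuousLinearMap.isOpenMap_of_ne_zero f hf).preimage_interior_eq_interior_preimage
    f.continuous, interior_Iic]
  rfl

lemma interior_ge_set (f : (ℝ × ℝ) →L[ℝ] ℝ) (hf : f ≠ 0) (a : ℝ) :
    interior {x | a ≤ f x} = {x | a < f x} := by
  have h1 : {x : ℝ × ℝ | a ≤ f x} = f ⁻¹' Ici a := rfl
  rw [h1, ← (ContinuousLinearMap.isOpenMap_of_ne_zero f hf).preimage_interior_eq_interior_preimage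
    f.continuous, interior_Ici]
  rfl

noncomputable def fstL : (ℝ × ℝ) →L[ℝ] ℝ := ContinuousLinearMap.fst ℝ ℝ ℝ
noncomputable def sndL : (ℝ × ℝ) →L[ℝ] ℝ := ContinuousLinearMap.snd ℝ ℝ ℝ
noncomputable def sumL : (ℝ × ℝ) →L[ℝ] ℝ := fstL + sndL

lemma fstL_ne : fstL ≠ 0 := by
  intro h
  have := congrArg (fun g : (ℝ × ℝ) →L[ℝ] ℝ => g (1, 0)) h
  simp [fstL] at this
lemma sndL_ne : sndL ≠ 0 := by
  intro h
  have := congrArg (fun g : (ℝ × ℝ) →L[ℝ] ℝ => g (0, 1)) h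
  simp [sndL] at this
lemma sumL_ne : sumL ≠ 0 := by
  intro h
  have := congrArg (fun g : (ℝ × ℝ) →L[ℝ] ℝ => g (1, 0)) h
  simp [sumL, fstL, sndL] at this

lemma interior_upT (i j : ℕ) :
    interior (upT i j) = {x | (i : ℝ) < x.1 ∧ (j : ℝ) < x.2 ∧ x.1 + x.2 < (i : ℝ) + j + 1} := by
  have : upT i j = {x | (i:ℝ) ≤ fstL x} ∩ ({x | (j:ℝ) ≤ sndL x} ∩ {x | sumL x ≤ (i:ℝ)+j+1}) := by
    ext x; simp [upT, fstL, sndL, sumL, and_assoc]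
  rw [this, interior_inter, interior_inter, interior_ge_set _ fstL_ne,
    interior_ge_set _ sndL_ne, interior_le_set _ sumL_ne]
  ext x; simp [fstL, sndL, sumL, and_assoc]

lemma interior_dnT (i j : ℕ) :
    interior (dnT i j) = {x | x.1 < (i : ℝ) + 1 ∧ x.2 < (j : ℝ) + 1 ∧ (i : ℝ) + j + 1 < x.1 + x.2} := by
  have : dnT i j = {x | fstL x ≤ (i:ℝ)+1} ∩ ({x | sndL x ≤ (j:ℝ)+1} ∩ {x | (i:ℝ)+j+1 ≤ sumL x}) := by
    ext x; simp [dnT, fstL, sndL, sumL, and_assoc]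
  rw [this, interior_inter, interior_inter, interior_le_set _ fstL_ne,
    interior_le_set _ sndL_ne, interior_ge_set _ sumL_ne]
  ext x; simp [fstL, sndL, sumL, and_assoc]

/-- profile of a point in an open up triangle -/
lemma mem_interior_upT {i j : ℕ} {x : ℝ × ℝ} (h : x ∈ interior (upT i j)) :
    ((i:ℝ) < x.1 ∧ x.1 < i + 1) ∧ ((j:ℝ) < x.2 ∧ x.2 < j + 1) ∧ x.1 + x.2 < (i:ℝ) + j + 1 := by
  rw [interior_upT] at h
  obtain ⟨h1, h2, h3⟩ := h
  exact ⟨⟨h1, by linarith⟩, ⟨h2, by linarith⟩, h3⟩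

lemma mem_interior_dnT {i j : ℕ} {x : ℝ × ℝ} (h : x ∈ interior (dnT i j)) :
    ((i:ℝ) < x.1 ∧ x.1 < i + 1) ∧ ((j:ℝ) < x.2 ∧ x.2 < j + 1) ∧ (i:ℝ) + j + 1 < x.1 + x.2 := by
  rw [interior_dnT] at h
  obtain ⟨h1, h2, h3⟩ := h
  exact ⟨⟨by linarith, h1⟩, ⟨by linarith, h2⟩, h3⟩

lemma nat_eq_of_strad {i i' : ℕ} {t : ℝ} (h1 : (i:ℝ) < t) (h2 : t < i + 1)
    (h3 : (i':ℝ) < t) (h4 : t < i' + 1) : i = i' := by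
  have a : (i:ℝ) < (i':ℝ) + 1 := lt_trans h1 h4
  have b : (i':ℝ) < (i:ℝ) + 1 := lt_trans h3 h2
  have a' : i < i' + 1 := by exact_mod_cast a
  have b' : i' < i + 1 := by exact_mod_cast b
  omega

def bigS (m : ℕ) : Set (ℝ × ℝ) := {x | 0 ≤ x.1 ∧ 0 ≤ x.2 ∧ x.1 + x.2 ≤ (m : ℝ)}

lemma simplex_eq_hull :
    upT 0 0 = convexHull ℝ {((0:ℝ), (0:ℝ)), ((1:ℝ), (0:ℝ)), ((0:ℝ), (1:ℝ))} := by
  apply le_antisymm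
  · intro x hx
    obtain ⟨h1, h2, h3⟩ := hx
    simp only [Nat.cast_zero] at h1 h2 h3
    have := Finset.centerMass_mem_convexHull (R := ℝ) (E := ℝ × ℝ)
      (s := {((0:ℝ), (0:ℝ)), ((1:ℝ), (0:ℝ)), ((0:ℝ), (1:ℝ))})
      (t := (Finset.univ : Finset (Fin 3)))
      (w := ![1 - x.1 - x.2, x.1, x.2])
      (by intro i _; fin_cases i <;> simp <;> linarith)
      (by simp [Fin.sum_univ_three]; linarith)
      (z := ![((0:ℝ),(0:ℝ)), (1,0), (0,1)])
      (by intro i _; fin_cases i <;> simp)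
    rwa [Finset.centerMass, show ∑ i, ![1 - x.1 - x.2, x.1, x.2] i = 1 by
        simp [Fin.sum_univ_three]; ring, inv_one, one_smul,
      show ∑ i, ![1 - x.1 - x.2, x.1, x.2] i • ![((0:ℝ),(0:ℝ)), (1,0), (0,1)] i = x by
        simp [Fin.sum_univ_three, Prod.ext_iff]] at this
  · apply convexHull_min
    · intro y hy
      simp only [mem_insert_iff, mem_singleton_iff] at hy
      rcases hy with h | h | h <;> subst h <;> constructor <;> norm_num
    · intro y hy z hz a b ha hb hab
      obtain ⟨hy1, hy2, hy3⟩ := hy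
      obtain ⟨hz1, hz2, hz3⟩ := hz
      simp only [Nat.cast_zero] at *
      refine ⟨?_, ?_, ?_⟩ <;> simp [Prod.fst_add, Prod.snd_add, Prod.smul_fst, Prod.smul_snd] <;>
        nlinarith

lemma upT_eq_image (i j : ℕ) :
    upT i j = (fun x : ℝ × ℝ => x + ((i:ℝ), (j:ℝ))) '' upT 0 0 := by
  ext x
  constructor
  · rintro ⟨h1, h2, h3⟩
    exact ⟨x - ((i:ℝ), (j:ℝ)), by
      constructor
      · refine ⟨?_, ?_, ?_⟩ <;> simp <;> linarith
      · simp⟩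
  · rintro ⟨y, ⟨h1, h2, h3⟩, rfl⟩
    simp only [Nat.cast_zero] at h1 h2 h3
    refine ⟨?_, ?_, ?_⟩ <;> simp <;> linarith

lemma dnT_eq_image (i j : ℕ) :
    dnT i j = (fun x : ℝ × ℝ => ((i:ℝ) + 1, (j:ℝ) + 1) - x) '' upT 0 0 := by
  ext x
  constructor
  · rintro ⟨h1, h2, h3⟩
    exact ⟨((i:ℝ) + 1, (j:ℝ) + 1) - x, by
      constructor
      · refine ⟨?_, ?_, ?_⟩ <;> simp <;> linarith
      · simp⟩
  · rintro ⟨y, ⟨h1, h2, h3⟩, rfl⟩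
    simp only [Nat.cast_zero] at h1 h2 h3
    refine ⟨?_, ?_, ?_⟩ <;> simp <;> linarith

lemma bigS_eq_image {m : ℕ} (hm : 1 ≤ m) :
    bigS m = (fun x : ℝ × ℝ => (m : ℝ) • x) '' upT 0 0 := by
  have hm0 : (0:ℝ) < m := by exact_mod_cast hm
  ext x
  constructor
  · rintro ⟨h1, h2, h3⟩
    refine ⟨(m:ℝ)⁻¹ • x, ⟨?_, ?_, ?_⟩, ?_⟩
    · simp; positivity
    · simp; positivity
    · simp only [Nat.cast_zero, Prod.smul_fst, Prod.smul_snd, smul_eq_mul]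
      rw [← mul_add, inv_mul_le_iff₀ hm0]
      linarith
    · simp [smul_smul, mul_inv_cancel₀ hm0.ne']
  · rintro ⟨y, ⟨h1, h2, h3⟩, rfl⟩
    simp only [Nat.cast_zero] at h1 h2 h3
    refine ⟨?_, ?_, ?_⟩
    · simp; positivity
    · simp; positivity
    · simp only [Prod.smul_fst, Prod.smul_snd, smul_eq_mul, ← mul_add]
      nlinarith

lemma toNat_cast_real {r : ℝ} (h : 0 ≤ r) : ((⌊r⌋.toNat : ℕ) : ℝ) = (⌊r⌋ : ℝ) := by
  have := Int.toNat_of_nonneg (Int.floor_nonneg.2 h)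
  exact_mod_cast congrArg (fun z : ℤ => (z : ℝ)) this

/-- The index-to-piece map. -/
def piece (m : ℕ) (p : Fin m × Fin m) : Set (ℝ × ℝ) :=
  if (p.1 : ℕ) + (p.2 : ℕ) + 1 ≤ m then upT p.1 p.2
  else dnT (m - 1 - (p.1 : ℕ)) (m - 1 - (p.2 : ℕ))

lemma piece_subset {m : ℕ} (p : Fin m × Fin m) : piece m p ⊆ bigS m := by
  obtain ⟨⟨i, hi⟩, ⟨j, hj⟩⟩ := p
  unfold piece
  simp only
  split_ifs with h
  · rintro x ⟨h1, h2, h3⟩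
    have hi : (0:ℝ) ≤ (i:ℕ) := by positivity
    have hj : (0:ℝ) ≤ (j:ℕ) := by positivity
    have : ((i:ℕ):ℝ) + (j:ℕ) + 1 ≤ (m:ℝ) := by exact_mod_cast h
    exact ⟨by linarith, by linarith, by linarith⟩
  · rintro x ⟨h1, h2, h3⟩
    obtain ⟨a, ha⟩ : ∃ a, m - 1 - (i:ℕ) = a ∧ a + (i:ℕ) + 1 = m := ⟨_, rfl, by omega⟩
    obtain ⟨b, hb⟩ : ∃ b, m - 1 - (j:ℕ) = b ∧ b + (j:ℕ) + 1 = m := ⟨_, rfl, by omega⟩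
    rw [ha.1] at h1 h3; rw [hb.1] at h2 h3
    have hab : (a:ℝ) + (b:ℝ) + 2 ≤ (m:ℝ) := by
      have : a + b + 2 ≤ m := by omega
      exact_mod_cast this
    have ha0 : (0:ℝ) ≤ (a:ℝ) := by positivity
    have hb0 : (0:ℝ) ≤ (b:ℝ) := by positivity
    exact ⟨by linarith, by linarith, by linarith⟩

lemma covers {m : ℕ} (hm : 1 ≤ m) {x : ℝ × ℝ} (hx : x ∈ bigS m) :
    ∃ p : Fin m × Fin m, x ∈ piece m p := by
  obtain ⟨h1, h2, h3⟩ := hx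
  set i0 : ℕ := min (⌊x.1⌋.toNat) (m - 1) with hi0
  set j0 : ℕ := min (⌊x.2⌋.toNat) (m - 1) with hj0
  have hi0m : i0 < m := by omega
  have hj0m : j0 < m := by omega
  have hfl1 : ((⌊x.1⌋.toNat : ℕ) : ℝ) ≤ x.1 := by
    rw [toNat_cast_real h1]; exact Int.floor_le x.1
  have hfl2 : ((⌊x.2⌋.toNat : ℕ) : ℝ) ≤ x.2 := by
    rw [toNat_cast_real h2]; exact Int.floor_le x.2
  have hfu1 : x.1 < (⌊x.1⌋.toNat : ℝ) + 1 := by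
    rw [toNat_cast_real h1]; exact Int.lt_floor_add_one x.1
  have hfu2 : x.2 < (⌊x.2⌋.toNat : ℝ) + 1 := by
    rw [toNat_cast_real h2]; exact Int.lt_floor_add_one x.2
  have hle1 : (i0 : ℝ) ≤ x.1 := le_trans (by exact_mod_cast Nat.cast_le.2 (min_le_left _ _)) hfl1
  have hle2 : (j0 : ℝ) ≤ x.2 := le_trans (by exact_mod_cast Nat.cast_le.2 (min_le_left _ _)) hfl2
  have hub1 : x.1 ≤ (i0 : ℝ) + 1 := by
    rcases le_or_gt (⌊x.1⌋.toNat) (m - 1) with h | h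
    · have : i0 = ⌊x.1⌋.toNat := by omega
      rw [this]; exact hfu1.le
    · have : i0 = m - 1 := by omega
      rw [this]
      have : ((m - 1 : ℕ) : ℝ) + 1 = (m : ℝ) := by
        have : (m - 1) + 1 = m := by omega
        exact_mod_cast congrArg (Nat.cast : ℕ → ℝ) this
      rw [this]; linarith
  have hub2 : x.2 ≤ (j0 : ℝ) + 1 := by
    rcases le_or_gt (⌊x.2⌋.toNat) (m - 1) with h | h
    · have : j0 = ⌊x.2⌋.toNat := by omega
      rw [this]; exact hfu2.le
    · have : j0 = m - 1 := by omega
      rw [this]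
      have : ((m - 1 : ℕ) : ℝ) + 1 = (m : ℝ) := by
        have : (m - 1) + 1 = m := by omega
        exact_mod_cast congrArg (Nat.cast : ℕ → ℝ) this
      rw [this]; linarith
  by_cases hc : x.1 + x.2 ≤ (i0 : ℝ) + j0 + 1
  · by_cases hd : i0 + j0 + 1 ≤ m
    · refine ⟨(⟨i0, hi0m⟩, ⟨j0, hj0m⟩), ?_⟩
      unfold piece
      simp only [hd, if_true]
      exact ⟨hle1, hle2, hc⟩
    · -- i0 + j0 ≥ m ; forces x = (i0, j0) and i0 + j0 = m, use up (i0, j0-1)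
      have hsum : (m : ℝ) ≤ (i0 : ℝ) + j0 := by
        have : m ≤ i0 + j0 := by omega
        exact_mod_cast this
      have hx1 : x.1 = (i0 : ℝ) := by linarith
      have hx2 : x.2 = (j0 : ℝ) := by linarith
      have hij : (i0 : ℝ) + j0 = m := by linarith
      have hijn : i0 + j0 = m := by exact_mod_cast hij
      have hj1 : 1 ≤ j0 := by omega
      refine ⟨(⟨i0, hi0m⟩, ⟨j0 - 1, by omega⟩), ?_⟩
      unfold piece
      have hcond : i0 + (j0 - 1) + 1 ≤ m := by omega
      simp only [hcond, if_true]
      have hcast : ((j0 - 1 : ℕ) : ℝ) = (j0 : ℝ) - 1 := by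
        have : (j0 - 1) + 1 = j0 := by omega
        have := congrArg (Nat.cast : ℕ → ℝ) this
        push_cast at this
        linarith
      refine ⟨by rw [hx1], by rw [hx2, hcast]; linarith, ?_⟩
      rw [hx1, hx2, hcast]
      linarith
  · -- down triangle at (i0, j0)
    push_neg at hc
    have hstep : (i0 : ℝ) + j0 + 1 < m := lt_of_lt_of_le hc h3
    have hstepn : i0 + j0 + 2 ≤ m := by
      have : (i0 + j0 + 1 : ℕ) < m := by exact_mod_cast lt_of_lt_of_le hc h3
      omega
    refine ⟨(⟨m - 1 - i0, by omega⟩, ⟨m - 1 - j0, by omega⟩), ?_⟩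
    unfold piece
    have hcond : ¬((m - 1 - i0) + (m - 1 - j0) + 1 ≤ m) := by omega
    simp only [hcond, if_false]
    have e1 : m - 1 - (m - 1 - i0) = i0 := by omega
    have e2 : m - 1 - (m - 1 - j0) = j0 := by omega
    rw [e1, e2]
    exact ⟨hub1, hub2, hc.le⟩

lemma piece_disjoint {m : ℕ} {p q : Fin m × Fin m} (h : p ≠ q) :
    interior (piece m p) ∩ interior (piece m q) = ∅ := by
  obtain ⟨⟨i, hi⟩, ⟨j, hj⟩⟩ := p
  obtain ⟨⟨k, hk⟩, ⟨l, hl⟩⟩ := q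
  rw [Set.eq_empty_iff_forall_notMem]
  rintro x ⟨hx1, hx2⟩
  unfold piece at hx1 hx2
  simp only at hx1 hx2
  split_ifs at hx1 hx2 with h1 h2 h2
  · obtain ⟨⟨a1, a2⟩, ⟨b1, b2⟩, c⟩ := mem_interior_upT hx1
    obtain ⟨⟨a1', a2'⟩, ⟨b1', b2'⟩, c'⟩ := mem_interior_upT hx2
    have e1 : i = k := nat_eq_of_strad a1 a2 a1' a2'
    have e2 : j = l := nat_eq_of_strad b1 b2 b1' b2'
    subst e1; subst e2
    exact h rfl
  · obtain ⟨⟨a1, a2⟩, ⟨b1, b2⟩, c⟩ := mem_interior_upT hx1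
    obtain ⟨⟨a1', a2'⟩, ⟨b1', b2'⟩, c'⟩ := mem_interior_dnT hx2
    have e1 : i = m - 1 - k := nat_eq_of_strad a1 a2 a1' a2'
    have e2 : j = m - 1 - l := nat_eq_of_strad b1 b2 b1' b2'
    rw [← e1, ← e2] at c'
    linarith
  · obtain ⟨⟨a1, a2⟩, ⟨b1, b2⟩, c⟩ := mem_interior_dnT hx1
    obtain ⟨⟨a1', a2'⟩, ⟨b1', b2'⟩, c'⟩ := mem_interior_upT hx2
    have e1 : m - 1 - i = k := nat_eq_of_strad a1 a2 a1' a2'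
    have e2 : m - 1 - j = l := nat_eq_of_strad b1 b2 b1' b2'
    rw [e1, e2] at c
    linarith
  · obtain ⟨⟨a1, a2⟩, ⟨b1, b2⟩, c⟩ := mem_interior_dnT hx1
    obtain ⟨⟨a1', a2'⟩, ⟨b1', b2'⟩, c'⟩ := mem_interior_dnT hx2
    have e1 : m - 1 - i = m - 1 - k := nat_eq_of_strad a1 a2 a1' a2'
    have e2 : m - 1 - j = m - 1 - l := nat_eq_of_strad b1 b2 b1' b2'
    have : i = k := by omega
    have : j = l := by omega
    subst this
    have : i = k := by omega
    subst this
    exact h rfl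

/-- The linear map sending the standard basis to `u`, `v`. -/
def lmap (u v : ℝ × ℝ) : (ℝ × ℝ) →ₗ[ℝ] (ℝ × ℝ) where
  toFun x := x.1 • u + x.2 • v
  map_add' x y := by simp [Prod.fst_add, Prod.snd_add, add_smul]; abel
  map_smul' c x := by simp [Prod.smul_fst, Prod.smul_snd, smul_smul, smul_add]

lemma lmap_bijective {u v : ℝ × ℝ} (hli : LinearIndependent ℝ ![u, v]) :
    Function.Bijective (lmap u v) := by
  have hinj : Function.Injective (lmap u v) := by
    rw [← LinearMap.ker_eq_bot, LinearMap.ker_eq_bot']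
    intro x hx
    have h := (Fintype.linearIndependent_iff.1 hli) ![x.1, x.2]
      (by simpa [Fin.sum_univ_two, lmap] using hx)
    exact Prod.ext (h 0) (h 1)
  exact ⟨hinj, LinearMap.injective_iff_surjective.1 hinj⟩

/-- The affine-equivalence-as-homeomorphism `x ↦ L x + p`. -/
noncomputable def homeoOf {u v : ℝ × ℝ} (hli : LinearIndependent ℝ ![u, v]) (p : ℝ × ℝ) :
    (ℝ × ℝ) ≃ₜ (ℝ × ℝ) :=
  ((LinearEquiv.ofBijective (lmap u v) (lmap_bijective hli)).toContinuousLinearEquiv).toHomeomorph.trans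
    (Homeomorph.addRight p)

lemma homeoOf_apply {u v : ℝ × ℝ} (hli : LinearIndependent ℝ ![u, v]) (p : ℝ × ℝ) :
    ⇑(homeoOf hli p) = fun x => lmap u v x + p := by
  funext x
  rfl

/-- For any (nondegenerate) triangle `T ⊂ ℝ²` with vertices in `ℤ²` and any integer `m ≥ 1`,
the scaled triangle `mT` (scaling by `m` about the vertex `P`) can be partitioned, up to null
sets, into `m²` triangles, each obtained from `T` by a translation by an integer vector and
possibly a point reflection about a point of `ℤ²` (the composition of a reflection `x ↦ 2p − x`,
`p ∈ ℤ²`, with an integer translation being precisely a map `x ↦ c − x` with `c ∈ ℤ²`). -/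
theorem triangle_partition (P Q S : ℤ × ℤ)
    (hind : AffineIndependent ℝ ![c2 P, c2 Q, c2 S])
    (T : Set (ℝ × ℝ)) (hT : T = convexHull ℝ {c2 P, c2 Q, c2 S})
    (m : ℕ) (hm : 1 ≤ m) :
    ∃ f : Fin (m ^ 2) → Set (ℝ × ℝ),
      (∀ k, (∃ s : ℤ × ℤ, f k = (fun x => x + c2 s) '' T)
          ∨ (∃ c : ℤ × ℤ, f k = (fun x => c2 c - x) '' T))
      ∧ (∀ k l, k ≠ l → interior (f k) ∩ interior (f l) = ∅)
      ∧ volume ((⋃ k, f k) ∆ ((fun x => c2 P + (m : ℝ) • (x - c2 P)) '' T)) = 0 := by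
  set p := c2 P with hp
  set u := c2 Q - c2 P with hu
  set v := c2 S - c2 P with hv
  -- linear independence of u, v
  have hli : LinearIndependent ℝ ![u, v] := by
    have h0 := (affineIndependent_iff_linearIndependent_vsub ℝ ![c2 P, c2 Q, c2 S] 0).1 hind
    have hf : Function.Injective
        (fun i : Fin 2 => (⟨Fin.succ i, Fin.succ_ne_zero i⟩ : {x : Fin 3 // x ≠ 0})) := by
      intro a b hab
      have := congrArg (fun s : {x : Fin 3 // x ≠ 0} => s.1) hab
      simpa [Fin.succ_inj] using this
    have h1 := h0.comp _ hf
    have heq : ((fun i : {x : Fin 3 // x ≠ 0} => ![c2 P, c2 Q, c2 S] ↑i -ᵥ ![c2 P, c2 Q, c2 S] 0)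
        ∘ (fun i : Fin 2 => (⟨Fin.succ i, Fin.succ_ne_zero i⟩ : {x : Fin 3 // x ≠ 0})))
        = ![u, v] := by
      funext i
      fin_cases i <;> simp [hu, hv]
    rwa [heq] at h1
  set L := lmap u v with hL
  set φ : ℝ × ℝ → ℝ × ℝ := fun x => L x + p with hφdef
  have hφ : ⇑(homeoOf hli p) = φ := homeoOf_apply hli p
  have hφinj : Function.Injective φ := hφ ▸ (homeoOf hli p).injective
  have hint : ∀ s : Set (ℝ × ℝ), interior (φ '' s) = φ '' interior s := by
    intro s
    rw [← hφ]
    exact ((homeoOf hli p).image_interior s).symm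
  -- φ as an affine map
  set A : (ℝ × ℝ) →ᵃ[ℝ] (ℝ × ℝ) := AffineMap.mk' φ L 0
    (by intro x; simp [hφdef]) with hA
  have hAc : ⇑A = φ := rfl
  -- T is the image of the standard simplex
  have hT4 : T = φ '' upT 0 0 := by
    rw [hT, simplex_eq_hull, ← hAc, AffineMap.image_convexHull]
    congr 1
    rw [Set.image_insert_eq, Set.image_insert_eq, Set.image_singleton]
    have e0 : A ((0:ℝ), (0:ℝ)) = c2 P := by
      simp [hAc, hφdef, hL, lmap, hp]
    have e1 : A ((1:ℝ), (0:ℝ)) = c2 Q := by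
      simp [hAc, hφdef, hL, lmap, hu, hp]
    have e2 : A ((0:ℝ), (1:ℝ)) = c2 S := by
      simp [hAc, hφdef, hL, lmap, hv, hp]
    rw [e0, e1, e2]
  -- the big triangle
  have hbig : (fun x => c2 P + (m : ℝ) • (x - c2 P)) '' T = φ '' bigS m := by
    have hcomp : ((fun x => c2 P + (m : ℝ) • (x - c2 P)) ∘ φ)
        = (φ ∘ fun x : ℝ × ℝ => (m : ℝ) • x) := by
      funext x
      show c2 P + (m : ℝ) • (φ x - c2 P) = φ ((m : ℝ) • x)
      simp only [hφdef]
      rw [_root_.map_smul]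
      have : L x + p - c2 P = L x := by rw [hp, add_sub_cancel_right]
      rw [this, hp]
      abel
    rw [hT4, bigS_eq_image hm, ← Set.image_comp, ← Set.image_comp, hcomp]
  -- description of the images of the pieces
  have hpiece : ∀ pr : Fin m × Fin m,
      (∃ s : ℤ × ℤ, φ '' piece m pr = (fun x => x + c2 s) '' T)
      ∨ (∃ c : ℤ × ℤ, φ '' piece m pr = (fun x => c2 c - x) '' T) := by
    rintro ⟨i, j⟩
    unfold piece
    simp only
    split_ifs with hc
    · left
      refine ⟨(((i:ℕ) : ℤ) • (Q - P)) + (((j:ℕ) : ℤ) • (S - P)), ?_⟩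
      have hw : c2 (((i:ℕ) : ℤ) • (Q - P) + ((j:ℕ) : ℤ) • (S - P))
          = L (((i:ℕ):ℝ), ((j:ℕ):ℝ)) := by
        simp only [hL, lmap, LinearMap.coe_mk, AddHom.coe_mk, c2, hu, hv,
          Prod.fst_add, Prod.snd_add, Prod.smul_fst, Prod.smul_snd, Prod.fst_sub, Prod.snd_sub,
          smul_eq_mul, nsmul_eq_mul, Prod.mk_add_mk, Prod.mk_sub_mk, Prod.smul_mk,
          Prod.mk.injEq]
        constructor <;> (push_cast; ring)
      rw [upT_eq_image, hT4, ← Set.image_comp, ← Set.image_comp, hw]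
      refine congrArg (fun g : (ℝ × ℝ) → (ℝ × ℝ) => g '' upT 0 0) ?_
      funext x
      show φ (x + (((i:ℕ):ℝ), ((j:ℕ):ℝ))) = φ x + L (((i:ℕ):ℝ), ((j:ℕ):ℝ))
      simp only [hφdef, map_add]
      abel
    · right
      refine ⟨(((m - 1 - (i:ℕ) : ℕ) : ℤ) + 1) • (Q - P)
        + (((m - 1 - (j:ℕ) : ℕ) : ℤ) + 1) • (S - P) + P + P, ?_⟩
      set a : ℕ := m - 1 - (i:ℕ) with ha
      set b : ℕ := m - 1 - (j:ℕ) with hb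
      have hw : c2 (((a : ℤ) + 1) • (Q - P) + ((b : ℤ) + 1) • (S - P) + P + P)
          = L ((a:ℝ) + 1, (b:ℝ) + 1) + p + p := by
        simp only [hL, lmap, LinearMap.coe_mk, AddHom.coe_mk, c2, hu, hv, hp,
          Prod.fst_add, Prod.snd_add, Prod.smul_fst, Prod.smul_snd, Prod.fst_sub, Prod.snd_sub,
          smul_eq_mul, nsmul_eq_mul, Prod.mk_add_mk, Prod.mk_sub_mk, Prod.smul_mk,
          Prod.mk.injEq]
        constructor <;> (push_cast; ring)
      rw [dnT_eq_image, hT4, ← Set.image_comp, ← Set.image_comp, hw]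
      refine congrArg (fun g : (ℝ × ℝ) → (ℝ × ℝ) => g '' upT 0 0) ?_
      funext x
      show φ (((a:ℝ) + 1, (b:ℝ) + 1) - x)
          = (L ((a:ℝ) + 1, (b:ℝ) + 1) + p + p) - φ x
      simp only [hφdef, map_sub]
      abel
  -- the pieces
  set e2' : Fin (m ^ 2) ≃ Fin m × Fin m :=
    (finCongr (pow_two m)).trans finProdFinEquiv.symm with he2
  refine ⟨fun k => φ '' piece m (e2' k), fun k => hpiece (e2' k), ?_, ?_⟩
  · intro k l hkl
    rw [hint, hint, ← Set.image_inter hφinj, piece_disjoint (e2'.injective.ne hkl),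
      Set.image_empty]
  · have hset : (⋃ k, piece m (e2' k)) = bigS m := by
      apply subset_antisymm
      · exact Set.iUnion_subset fun k => piece_subset _
      · intro x hx
        obtain ⟨pr, hpr⟩ := covers hm hx
        exact Set.mem_iUnion.2 ⟨e2'.symm pr, by simpa using hpr⟩
    rw [← Set.image_iUnion, hset, hbig, symmDiff_self]
    simp
end

section
/- The 1D ECC coupled energy E^ecc(y) := ∑_{b∈B, b⊄Ω_c} e_b(y) + ∑_{b∈B, b⊂Ω_c} c_b(y) is consistent: its first variation at the uniform deformation y(x)=Fx vanishes for all admissible test functions vanishing on the constrained atoms. -/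
open MeasureTheory
open scoped Classical
open Filter Topology intervalIntegral

lemma lipschitz_integral_deriv {K : NNReal} {v : ℝ → ℝ} (hv : LipschitzWith K v) (a b : ℝ) :
    ∫ x in a..b, deriv v x = v b - v a := by
  have hc : Continuous v := hv.continuous
  set h : ℕ → ℝ := fun n => ((n : ℝ) + 1)⁻¹ with hh
  have hpos : ∀ n, 0 < h n := fun n => by positivity
  have hto : Tendsto h atTop (𝓝 0) := by
    have := tendsto_one_div_add_atTop_nhds_zero_nat (𝕜 := ℝ)
    simpa [hh, one_div] using this
  set F : ℕ → ℝ → ℝ := fun n x => (h n)⁻¹ * (v (x + h n) - v x) with hFdef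
  -- the averaged integrals converge to point values
  have key : ∀ c : ℝ, Tendsto (fun n => (h n)⁻¹ * ∫ x in c..(c + h n), v x) atTop (𝓝 (v c)) := by
    intro c
    have est : ∀ n, ‖(h n)⁻¹ * (∫ x in c..(c + h n), v x) - v c‖ ≤ (K : ℝ) * h n := by
      intro n
      have h1 : (∫ x in c..(c + h n), v x) - (h n) * v c
          = ∫ x in c..(c + h n), (v x - v c) := by
        rw [intervalIntegral.integral_sub (hc.intervalIntegrable _ _) intervalIntegrable_const,
          intervalIntegral.integral_const]
        simp [smul_eq_mul]
      have h2 : ‖∫ x in c..(c + h n), (v x - v c)‖ ≤ ((K : ℝ) * h n) * |c + h n - c| := by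
        apply intervalIntegral.norm_integral_le_of_norm_le_const
        intro x hx
        rw [Set.uIoc_of_le (by linarith [hpos n])] at hx
        have hd : dist (v x) (v c) ≤ (K : ℝ) * dist x c := hv.dist_le_mul x c
        rw [Real.dist_eq, Real.dist_eq] at hd
        have : |x - c| ≤ h n := by
          rw [abs_le]
          refine ⟨by linarith [hx.1, hpos n], by linarith [hx.2]⟩
        calc ‖v x - v c‖ ≤ (K : ℝ) * |x - c| := hd
          _ ≤ (K : ℝ) * h n := by
              exact mul_le_mul_of_nonneg_left this K.coe_nonneg
      have h3 : (h n)⁻¹ * (∫ x in c..(c + h n), v x) - v c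
          = (h n)⁻¹ * ((∫ x in c..(c + h n), v x) - (h n) * v c) := by
        rw [mul_sub, ← mul_assoc, inv_mul_cancel₀ (hpos n).ne', one_mul]
      rw [h3, h1, norm_mul, norm_inv]
      have hne : (h n) ≠ 0 := (hpos n).ne'
      have : ‖h n‖ = h n := by rw [Real.norm_eq_abs, abs_of_pos (hpos n)]
      rw [this]
      calc (h n)⁻¹ * ‖∫ x in c..(c + h n), (v x - v c)‖
          ≤ (h n)⁻¹ * (((K : ℝ) * h n) * |c + h n - c|) := by
            exact mul_le_mul_of_nonneg_left h2 (inv_nonneg.2 (hpos n).le)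
        _ = (K : ℝ) * h n := by
            rw [show c + h n - c = h n by ring, abs_of_pos (hpos n)]
            field_simp
    have hz : Tendsto (fun n => (h n)⁻¹ * (∫ x in c..(c + h n), v x) - v c) atTop (𝓝 0) := by
      apply squeeze_zero_norm est
      simpa using hto.const_mul (K : ℝ)
    have := hz.add (tendsto_const_nhds (x := v c))
    simpa using this
  -- rewrite ∫ F n
  have int_eq : ∀ n, ∫ x in a..b, F n x
      = (h n)⁻¹ * (∫ x in b..(b + h n), v x) - (h n)⁻¹ * (∫ x in a..(a + h n), v x) := by
    intro n
    rw [show (∫ x in a..b, F n x) = ∫ x in a..b, (h n)⁻¹ * (v (x + h n) - v x) from rfl,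
      intervalIntegral.integral_const_mul,
      intervalIntegral.integral_sub
        ((Continuous.intervalIntegrable (by continuity : Continuous fun x => v (x + h n)) _ _))
        (hc.intervalIntegrable _ _),
      intervalIntegral.integral_comp_add_right]
    have A : (∫ x in a..(a + h n), v x) + ∫ x in (a + h n)..(b + h n), v x
        = ∫ x in a..(b + h n), v x :=
      intervalIntegral.integral_add_adjacent_intervals (hc.intervalIntegrable _ _)
        (hc.intervalIntegrable _ _)
    have B : (∫ x in a..b, v x) + ∫ x in b..(b + h n), v x = ∫ x in a..(b + h n), v x :=
      intervalIntegral.integral_add_adjacent_intervals (hc.intervalIntegrable _ _)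
        (hc.intervalIntegrable _ _)
    have : (∫ x in (a + h n)..(b + h n), v x) - ∫ x in a..b, v x
        = (∫ x in b..(b + h n), v x) - ∫ x in a..(a + h n), v x := by linarith
    rw [this]; ring
  have lim1 : Tendsto (fun n => ∫ x in a..b, F n x) atTop (𝓝 (v b - v a)) := by
    have := (key b).sub (key a)
    simpa only [int_eq] using this
  -- dominated convergence
  have lim2 : Tendsto (fun n => ∫ x in a..b, F n x) atTop (𝓝 (∫ x in a..b, deriv v x)) := by
    apply intervalIntegral.tendsto_integral_filter_of_dominated_convergence
      (fun _ => (K : ℝ))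
    · exact Eventually.of_forall fun n =>
        (Continuous.aestronglyMeasurable (by fun_prop)).restrict
    · refine Eventually.of_forall fun n => Eventually.of_forall fun x _ => ?_
      have hd : dist (v (x + h n)) (v x) ≤ (K : ℝ) * dist (x + h n) x := hv.dist_le_mul _ _
      rw [Real.dist_eq, Real.dist_eq] at hd
      have hxx : |x + h n - x| = h n := by rw [show x + h n - x = h n by ring, abs_of_pos (hpos n)]
      rw [hxx] at hd
      have : ‖F n x‖ = (h n)⁻¹ * |v (x + h n) - v x| := by
        show ‖(h n)⁻¹ * (v (x + h n) - v x)‖ = _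
        rw [Real.norm_eq_abs, abs_mul, abs_inv, abs_of_pos (hpos n)]
      rw [this]
      calc (h n)⁻¹ * |v (x + h n) - v x| ≤ (h n)⁻¹ * ((K : ℝ) * h n) :=
            mul_le_mul_of_nonneg_left hd (inv_nonneg.2 (hpos n).le)
        _ = (K : ℝ) := by rw [mul_comm (K : ℝ), ← mul_assoc, inv_mul_cancel₀ (hpos n).ne', one_mul]
    · exact intervalIntegrable_const
    · have hae : ∀ᵐ x : ℝ, DifferentiableAt ℝ v x := hv.ae_differentiableAt
      filter_upwards [hae] with x hx _
      have hder : HasDerivAt v (deriv v x) x := hx.hasDerivAt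
      rw [hasDerivAt_iff_tendsto_slope] at hder
      have ht : Tendsto (fun n => x + h n) atTop (𝓝[≠] x) := by
        rw [tendsto_nhdsWithin_iff]
        constructor
        · simpa using (tendsto_const_nhds (x := x)).add hto
        · exact Eventually.of_forall fun n => by
            simp [Set.mem_compl_iff, (hpos n).ne']
      have heq : (fun n => F n x) = (slope v x) ∘ (fun n => x + h n) := by
        funext n
        show (h n)⁻¹ * (v (x + h n) - v x) = slope v x (x + h n)
        rw [slope_def_field, show x + h n - x = h n by ring, div_eq_inv_mul]
      rw [heq]
      exact hder.comp ht
  exact tendsto_nhds_unique lim2 lim1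


/-- Consistency of the 1D ECC method: the first variation of
`E^ecc(y) = ∑_{b∈B, b⊄Ω_c} e_b(y) + ∑_{b∈B, b⊂Ω_c} c_b(y)` at the uniform deformation
`y(x) = F x` vanishes for every Lipschitz test function `v` vanishing on the constrained
atoms.  Here bonds are pairs `(i, i+r)`, `1 ≤ r ≤ R`, with both endpoints in `I`;
`e_b'(Fx; v) = φ'(rF)(v_{i+r} − v_i)` and `c_b'(Fx; v) = (1/r)∫_b φ'(rF) r v'(x) dx`. -/
theorem ecc_consistency_1d (I ID : Finset ℤ) (hID : ID ⊆ I) (R : ℕ)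
    (φ : ℝ → ℝ) (hφ : ContDiff ℝ 1 φ) (F : ℝ) (Ωc : Set ℝ)
    (K : NNReal) (v : ℝ → ℝ) (hv : LipschitzWith K v)
    (hv0 : ∀ i ∈ ID, v (i : ℝ) = 0)
    (hnb : ∀ i ∈ I \ ID, ∀ r : ℤ, |r| ≤ (R : ℤ) → i + r ∈ I) :
    (∑ p ∈ (I ×ˢ Finset.Icc (1 : ℤ) (R : ℤ)).filter
        (fun p => p.1 + p.2 ∈ I ∧ ¬ Set.Ioo ((p.1 : ℝ)) ((p.1 : ℝ) + (p.2 : ℝ)) ⊆ Ωc),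
        deriv φ ((p.2 : ℝ) * F) * (v ((p.1 : ℝ) + (p.2 : ℝ)) - v (p.1 : ℝ)))
    + (∑ p ∈ (I ×ˢ Finset.Icc (1 : ℤ) (R : ℤ)).filter
        (fun p => p.1 + p.2 ∈ I ∧ Set.Ioo ((p.1 : ℝ)) ((p.1 : ℝ) + (p.2 : ℝ)) ⊆ Ωc),
        (1 / (p.2 : ℝ)) *
          ∫ x in ((p.1 : ℝ))..((p.1 : ℝ) + (p.2 : ℝ)),
            deriv φ ((p.2 : ℝ) * F) * ((p.2 : ℝ) * deriv v x)) = 0 := by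
  classical
  set f : ℤ × ℤ → ℝ :=
    fun p => deriv φ ((p.2 : ℝ) * F) * (v ((p.1 : ℝ) + (p.2 : ℝ)) - v (p.1 : ℝ)) with hf
  -- Step 1: the continuum bond variation equals the atomistic one, by FTC for Lipschitz `v`
  have hint : ∀ p ∈ (I ×ˢ Finset.Icc (1 : ℤ) (R : ℤ)).filter
      (fun p => p.1 + p.2 ∈ I ∧ Set.Ioo ((p.1 : ℝ)) ((p.1 : ℝ) + (p.2 : ℝ)) ⊆ Ωc),
      (1 / (p.2 : ℝ)) *
        ∫ x in ((p.1 : ℝ))..((p.1 : ℝ) + (p.2 : ℝ)),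
          deriv φ ((p.2 : ℝ) * F) * ((p.2 : ℝ) * deriv v x) = f p := by
    intro p hp
    have hp2 : p.2 ∈ Finset.Icc (1 : ℤ) (R : ℤ) :=
      (Finset.mem_product.mp (Finset.mem_filter.mp hp).1).2
    have hr : (1 : ℤ) ≤ p.2 := (Finset.mem_Icc.mp hp2).1
    have hrR : (0 : ℝ) < (p.2 : ℝ) := by exact_mod_cast lt_of_lt_of_le zero_lt_one hr
    have h1 : (fun x => deriv φ ((p.2 : ℝ) * F) * ((p.2 : ℝ) * deriv v x))
        = fun x => (deriv φ ((p.2 : ℝ) * F) * (p.2 : ℝ)) * deriv v x := by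
      funext x; ring
    rw [show (∫ x in ((p.1 : ℝ))..((p.1 : ℝ) + (p.2 : ℝ)),
          deriv φ ((p.2 : ℝ) * F) * ((p.2 : ℝ) * deriv v x))
        = ∫ x in ((p.1 : ℝ))..((p.1 : ℝ) + (p.2 : ℝ)),
          (deriv φ ((p.2 : ℝ) * F) * (p.2 : ℝ)) * deriv v x from by rw [h1],
      intervalIntegral.integral_const_mul, lipschitz_integral_deriv hv]
    rw [hf]
    field_simp
  rw [Finset.sum_congr rfl hint]
  -- Step 2: combine the two sums into one over all bonds
  have hcomb :
      (∑ p ∈ (I ×ˢ Finset.Icc (1 : ℤ) (R : ℤ)).filter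
        (fun p => p.1 + p.2 ∈ I ∧ ¬ Set.Ioo ((p.1 : ℝ)) ((p.1 : ℝ) + (p.2 : ℝ)) ⊆ Ωc), f p)
      + (∑ p ∈ (I ×ˢ Finset.Icc (1 : ℤ) (R : ℤ)).filter
        (fun p => p.1 + p.2 ∈ I ∧ Set.Ioo ((p.1 : ℝ)) ((p.1 : ℝ) + (p.2 : ℝ)) ⊆ Ωc), f p)
      = ∑ p ∈ (I ×ˢ Finset.Icc (1 : ℤ) (R : ℤ)).filter (fun p => p.1 + p.2 ∈ I), f p := by
    rw [show ((I ×ˢ Finset.Icc (1 : ℤ) (R : ℤ)).filter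
        (fun p => p.1 + p.2 ∈ I ∧ ¬ Set.Ioo ((p.1 : ℝ)) ((p.1 : ℝ) + (p.2 : ℝ)) ⊆ Ωc))
        = ((I ×ˢ Finset.Icc (1 : ℤ) (R : ℤ)).filter (fun p => p.1 + p.2 ∈ I)).filter
          (fun p => ¬ Set.Ioo ((p.1 : ℝ)) ((p.1 : ℝ) + (p.2 : ℝ)) ⊆ Ωc) from by
        rw [Finset.filter_filter],
      show ((I ×ˢ Finset.Icc (1 : ℤ) (R : ℤ)).filter
        (fun p => p.1 + p.2 ∈ I ∧ Set.Ioo ((p.1 : ℝ)) ((p.1 : ℝ) + (p.2 : ℝ)) ⊆ Ωc))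
        = ((I ×ˢ Finset.Icc (1 : ℤ) (R : ℤ)).filter (fun p => p.1 + p.2 ∈ I)).filter
          (fun p => Set.Ioo ((p.1 : ℝ)) ((p.1 : ℝ) + (p.2 : ℝ)) ⊆ Ωc) from by
        rw [Finset.filter_filter],
      add_comm, Finset.sum_filter_add_sum_filter_not]
  rw [hcomb]
  -- Step 3: the total atomistic variation vanishes
  set S : Finset (ℤ × ℤ) :=
    (I ×ˢ Finset.Icc (1 : ℤ) (R : ℤ)).filter (fun p => p.1 + p.2 ∈ I) with hS
  set S₀ : Finset (ℤ × ℤ) := (I \ ID) ×ˢ Finset.Icc (1 : ℤ) (R : ℤ) with hS₀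
  have habs : ∀ r : ℤ, r ∈ Finset.Icc (1 : ℤ) (R : ℤ) → |r| ≤ (R : ℤ) := by
    intro r hr
    rw [Finset.mem_Icc] at hr
    rw [abs_of_pos (lt_of_lt_of_le one_pos hr.1)]
    exact hr.2
  have habs' : ∀ r : ℤ, r ∈ Finset.Icc (1 : ℤ) (R : ℤ) → |(-r)| ≤ (R : ℤ) := by
    intro r hr; rw [abs_neg]; exact habs r hr
  have hsub : ∀ p : ℤ × ℤ, f p
      = deriv φ ((p.2 : ℝ) * F) * v (((p.1 + p.2 : ℤ) : ℝ))
        - deriv φ ((p.2 : ℝ) * F) * v ((p.1 : ℝ)) := by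
    intro p; rw [hf]; push_cast; ring
  rw [Finset.sum_congr rfl (fun p _ => hsub p), Finset.sum_sub_distrib, sub_eq_zero]
  -- left sum: restrict to bonds whose head carries a nonzero test value
  have hL : ∑ p ∈ S, deriv φ ((p.2 : ℝ) * F) * v (((p.1 + p.2 : ℤ) : ℝ))
      = ∑ p ∈ S.filter (fun p => p.1 + p.2 ∉ ID),
          deriv φ ((p.2 : ℝ) * F) * v (((p.1 + p.2 : ℤ) : ℝ)) := by
    refine (Finset.sum_filter_of_ne ?_).symm
    intro p _ hne hmem
    exact hne (by rw [hv0 _ hmem, mul_zero])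
  have hR : ∑ p ∈ S, deriv φ ((p.2 : ℝ) * F) * v ((p.1 : ℝ))
      = ∑ p ∈ S.filter (fun p => p.1 ∉ ID),
          deriv φ ((p.2 : ℝ) * F) * v ((p.1 : ℝ)) := by
    refine (Finset.sum_filter_of_ne ?_).symm
    intro p _ hne hmem
    exact hne (by rw [hv0 _ hmem, mul_zero])
  rw [hL, hR]
  -- right filtered set is exactly S₀
  have hset : S.filter (fun p => p.1 ∉ ID) = S₀ := by
    ext p
    simp only [hS, hS₀, Finset.mem_filter, Finset.mem_product, Finset.mem_sdiff]
    constructor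
    · rintro ⟨⟨⟨h1, h2⟩, _⟩, h4⟩
      exact ⟨⟨h1, h4⟩, h2⟩
    · rintro ⟨⟨h1, h2⟩, h3⟩
      exact ⟨⟨⟨h1, h3⟩, hnb p.1 (Finset.mem_sdiff.mpr ⟨h1, h2⟩) p.2 (habs p.2 h3)⟩, h2⟩
  rw [hset]
  -- left sum is reindexed by the bijection (i, r) ↦ (i + r, r)
  refine Finset.sum_bij' (fun p _ => ((p.1 + p.2, p.2) : ℤ × ℤ))
    (fun q _ => ((q.1 - q.2, q.2) : ℤ × ℤ)) ?_ ?_ ?_ ?_ ?_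
  · intro p hp
    simp only [Finset.mem_filter, hS, Finset.mem_product] at hp
    simp only [hS₀, Finset.mem_product, Finset.mem_sdiff]
    exact ⟨⟨hp.1.2, hp.2⟩, hp.1.1.2⟩
  · intro q hq
    simp only [hS₀, Finset.mem_product, Finset.mem_sdiff] at hq
    simp only [Finset.mem_filter, hS, Finset.mem_product, sub_add_cancel]
    refine ⟨⟨⟨?_, hq.2⟩, hq.1.1⟩, hq.1.2⟩
    have := hnb q.1 (Finset.mem_sdiff.mpr hq.1) (-q.2) (habs' q.2 hq.2)
    simpa [sub_eq_add_neg] using this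
  · intro p _; simp
  · intro q _; simp
  · intro p _; simp
end

section
/- In 1D, the ECC energy admits the efficient representation E^ecc(y) = ∑_{b∈B, b⊄Ω_c} (e_b(y) − c_b(y)) + E_c(y), where c_b(y) := (1/r)∫_{Ω_c∩b} φ(r y') dx for all bonds b and E_c(y) = ∑_{r=1}^R ∫_{Ω_c} φ(r y') dx, provided every bond of length ≤ R intersecting Ω_c belongs to B. -/
open MeasureTheory
open scoped Classical

/-- Efficient representation of the 1D ECC energy:
`E^ecc(y) = ∑_{b∈B, b⊄Ω_c} (e_b(y) − c_b(y)) + E_c(y)`, where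
`c_b(y) = (1/r)∫_{Ω_c∩b} φ(r y') dx` for all bonds `b` and
`E_c(y) = ∑_{r=1}^R ∫_{Ω_c} φ(r y') dx`, provided every bond of length `≤ R` intersecting
the continuum interval `Ω_c` belongs to the bond set `B`. -/
theorem ecc_efficient_1d (I : Finset ℤ) (R : ℕ)
    (φ : ℝ → ℝ) (hφ : Continuous φ)
    (K : NNReal) (y : ℝ → ℝ) (hy : LipschitzWith K y)
    (a b : ℝ) (Ωc : Set ℝ) (hΩc : Ωc = Set.Ioo a b)
    (hB : ∀ i r : ℤ, 1 ≤ r → r ≤ (R : ℤ) →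
      (Set.Ioo (i : ℝ) ((i : ℝ) + (r : ℝ)) ∩ Ωc).Nonempty → i ∈ I ∧ i + r ∈ I) :
    (∑ p ∈ ((I ×ˢ Finset.Icc (1 : ℤ) (R : ℤ)).filter (fun p => p.1 + p.2 ∈ I)).filter
        (fun p => ¬ Set.Ioo ((p.1 : ℝ)) ((p.1 : ℝ) + (p.2 : ℝ)) ⊆ Ωc),
        φ (y ((p.1 : ℝ) + (p.2 : ℝ)) - y (p.1 : ℝ)))
    + (∑ p ∈ ((I ×ˢ Finset.Icc (1 : ℤ) (R : ℤ)).filter (fun p => p.1 + p.2 ∈ I)).filter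
        (fun p => Set.Ioo ((p.1 : ℝ)) ((p.1 : ℝ) + (p.2 : ℝ)) ⊆ Ωc),
        (1 / (p.2 : ℝ)) *
          ∫ x in Ωc ∩ Set.Ioo ((p.1 : ℝ)) ((p.1 : ℝ) + (p.2 : ℝ)), φ ((p.2 : ℝ) * deriv y x))
    = (∑ p ∈ ((I ×ˢ Finset.Icc (1 : ℤ) (R : ℤ)).filter (fun p => p.1 + p.2 ∈ I)).filter
        (fun p => ¬ Set.Ioo ((p.1 : ℝ)) ((p.1 : ℝ) + (p.2 : ℝ)) ⊆ Ωc),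
        (φ (y ((p.1 : ℝ) + (p.2 : ℝ)) - y (p.1 : ℝ))
          - (1 / (p.2 : ℝ)) *
            ∫ x in Ωc ∩ Set.Ioo ((p.1 : ℝ)) ((p.1 : ℝ) + (p.2 : ℝ)), φ ((p.2 : ℝ) * deriv y x)))
    + ∑ r ∈ Finset.Icc (1 : ℤ) (R : ℤ), ∫ x in Ωc, φ ((r : ℝ) * deriv y x) := by
  classical
  -- notation
  set g : ℤ → ℝ → ℝ := fun r x => φ ((r : ℝ) * deriv y x) with hg
  have hΩm : MeasurableSet Ωc := by rw [hΩc]; exact measurableSet_Ioo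
  have hΩfin : volume Ωc < ⊤ := by rw [hΩc]; exact measure_Ioo_lt_top
  haveI : Fact (volume Ωc < ⊤) := ⟨hΩfin⟩
  -- bound on the derivative
  have hder : ∀ x : ℝ, |deriv y x| ≤ (K : ℝ) := by
    intro x
    have h1 : deriv y x = fderiv ℝ y x 1 := (fderiv_apply_one_eq_deriv).symm
    have h2 : ‖fderiv ℝ y x‖ ≤ (K : ℝ) := norm_fderiv_le_of_lipschitz ℝ hy
    calc |deriv y x| = ‖fderiv ℝ y x 1‖ := by rw [h1]; rfl
      _ ≤ ‖fderiv ℝ y x‖ * ‖(1 : ℝ)‖ := (fderiv ℝ y x).le_opNorm 1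
      _ ≤ (K : ℝ) := by simpa using h2
  -- integrability of g r on Ωc
  have hint : ∀ r : ℤ, IntegrableOn (g r) Ωc := by
    intro r
    obtain ⟨C, hC⟩ :=
      (isCompact_Icc (a := -(|(r : ℝ)| * (K : ℝ))) (b := |(r : ℝ)| * (K : ℝ))).exists_bound_of_continuousOn
        hφ.continuousOn
    refine ⟨((hφ.measurable.comp (measurable_const.mul (measurable_deriv y))).aestronglyMeasurable), ?_⟩
    apply HasFiniteIntegral.of_bounded (C := C)
    filter_upwards with x
    apply hC
    have : |(r : ℝ) * deriv y x| ≤ |(r : ℝ)| * (K : ℝ) := by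
      rw [abs_mul]
      exact mul_le_mul_of_nonneg_left (hder x) (abs_nonneg _)
    have := abs_le.mp this
    exact ⟨this.1, this.2⟩
  -- key covering identity
  have key : ∀ r ∈ Finset.Icc (1 : ℤ) (R : ℤ),
      (∑ i ∈ I, (1 / (r : ℝ)) *
        ∫ x in Ωc ∩ Set.Ioo ((i : ℝ)) ((i : ℝ) + (r : ℝ)), g r x) = ∫ x in Ωc, g r x := by
    intro r hr
    obtain ⟨hr1, hrR⟩ := Finset.mem_Icc.mp hr
    have hr0 : (r : ℝ) ≠ 0 := by
      have : (0 : ℝ) < (r : ℝ) := by exact_mod_cast hr1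
      linarith
    calc (∑ i ∈ I, (1 / (r : ℝ)) *
            ∫ x in Ωc ∩ Set.Ioo ((i : ℝ)) ((i : ℝ) + (r : ℝ)), g r x)
        = ∑ i ∈ I, ∫ x in Ωc,
            (1 / (r : ℝ)) * (Set.Ioo ((i : ℝ)) ((i : ℝ) + (r : ℝ))).indicator (g r) x := by
          refine Finset.sum_congr rfl fun i _ => ?_
          rw [← setIntegral_indicator measurableSet_Ioo, ← integral_const_mul]
      _ = ∫ x in Ωc, ∑ i ∈ I,
            (1 / (r : ℝ)) * (Set.Ioo ((i : ℝ)) ((i : ℝ) + (r : ℝ))).indicator (g r) x := by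
          rw [← integral_finset_sum]
          intro i _
          exact ((hint r).indicator measurableSet_Ioo).const_mul _
      _ = ∫ x in Ωc, g r x := by
          apply setIntegral_congr_ae hΩm
          have hz : volume (Set.range (Int.cast : ℤ → ℝ)) = 0 :=
            (Set.countable_range _).measure_zero _
          have hae : ∀ᵐ x : ℝ, x ∉ Set.range (Int.cast : ℤ → ℝ) := by
            rw [ae_iff]
            simp only [not_not, Set.setOf_mem_eq]
            exact hz
          filter_upwards [hae] with x hxint hxΩ
          have hfilter : I.filter (fun i : ℤ => x ∈ Set.Ioo ((i : ℝ)) ((i : ℝ) + (r : ℝ)))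
              = Finset.Ioc (⌊x⌋ - r) ⌊x⌋ := by
            ext i
            simp only [Finset.mem_filter, Finset.mem_Ioc, Set.mem_Ioo]
            constructor
            · rintro ⟨_, h1, h2⟩
              constructor
              · have hfl : (⌊x⌋ : ℝ) < (i : ℝ) + (r : ℝ) := lt_of_le_of_lt (Int.floor_le x) h2
                have : ⌊x⌋ < i + r := by exact_mod_cast hfl
                omega
              · exact Int.le_floor.mpr h1.le
            · rintro ⟨h1, h2⟩
              have hx1 : (i : ℝ) < x := by
                have hle : (i : ℝ) ≤ x := Int.le_floor.mp h2
                rcases hle.lt_or_eq with h | h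
                · exact h
                · exact absurd ⟨i, h⟩ hxint
              have hx2 : x < (i : ℝ) + (r : ℝ) := by
                have h1' : ⌊x⌋ + 1 ≤ i + r := by omega
                have : (⌊x⌋ : ℝ) + 1 ≤ (i : ℝ) + (r : ℝ) := by exact_mod_cast h1'
                exact lt_of_lt_of_le (Int.lt_floor_add_one x) this
              have hiI : i ∈ I := (hB i r hr1 hrR ⟨x, ⟨hx1, hx2⟩, hxΩ⟩).1
              exact ⟨hiI, hx1, hx2⟩
          have hcard : (((Finset.Ioc (⌊x⌋ - r) ⌊x⌋).card : ℤ) : ℝ) = (r : ℝ) := by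
            rw [Int.card_Ioc]
            have : (⌊x⌋ - (⌊x⌋ - r)).toNat = r.toNat := by omega
            rw [this]
            exact_mod_cast congrArg (Int.cast : ℤ → ℝ) (Int.toNat_of_nonneg (by omega))
          calc (∑ i ∈ I,
                  (1 / (r : ℝ)) * (Set.Ioo ((i : ℝ)) ((i : ℝ) + (r : ℝ))).indicator (g r) x)
              = ∑ i ∈ I.filter (fun i : ℤ => x ∈ Set.Ioo ((i : ℝ)) ((i : ℝ) + (r : ℝ))),
                  (1 / (r : ℝ)) * g r x := by
                refine (Finset.sum_congr rfl fun i _ => ?_).trans (Finset.sum_filter _ _).symm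
                by_cases hx : x ∈ Set.Ioo ((i : ℝ)) ((i : ℝ) + (r : ℝ)) <;>
                  simp [Set.indicator, hx]
            _ = ((Finset.Ioc (⌊x⌋ - r) ⌊x⌋).card : ℝ) * ((1 / (r : ℝ)) * g r x) := by
                rw [hfilter, Finset.sum_const, nsmul_eq_mul]
            _ = g r x := by
                have : ((Finset.Ioc (⌊x⌋ - r) ⌊x⌋).card : ℝ) = (r : ℝ) := by exact_mod_cast hcard
                rw [this]
                field_simp
  -- abbreviations for the algebraic rearrangement
  set A := (I ×ˢ Finset.Icc (1 : ℤ) (R : ℤ)).filter (fun p => p.1 + p.2 ∈ I) with hA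
  set c : ℤ × ℤ → ℝ := fun p => (1 / (p.2 : ℝ)) *
      ∫ x in Ωc ∩ Set.Ioo ((p.1 : ℝ)) ((p.1 : ℝ) + (p.2 : ℝ)), g p.2 x with hc
  set P : ℤ × ℤ → Prop := fun p => Set.Ioo ((p.1 : ℝ)) ((p.1 : ℝ) + (p.2 : ℝ)) ⊆ Ωc with hP
  have hsplit : (∑ p ∈ A.filter P, c p) + (∑ p ∈ A.filter fun p => ¬ P p, c p) = ∑ p ∈ A, c p :=
    Finset.sum_filter_add_sum_filter_not A P c
  have hall : (∑ p ∈ A, c p)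
      = ∑ r ∈ Finset.Icc (1 : ℤ) (R : ℤ), ∫ x in Ωc, g r x := by
    have h1 : (∑ p ∈ A, c p) = ∑ p ∈ I ×ˢ Finset.Icc (1 : ℤ) (R : ℤ), c p := by
      refine Finset.sum_subset (Finset.filter_subset _ _) ?_
      intro p hp hpn
      obtain ⟨hp1, hp2⟩ := Finset.mem_product.mp hp
      obtain ⟨hq1, hq2⟩ := Finset.mem_Icc.mp hp2
      have hempty : ¬ (Set.Ioo ((p.1 : ℝ)) ((p.1 : ℝ) + (p.2 : ℝ)) ∩ Ωc).Nonempty := by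
        intro hne
        exact hpn (Finset.mem_filter.mpr ⟨hp, (hB p.1 p.2 hq1 hq2 hne).2⟩)
      have hemp : Ωc ∩ Set.Ioo ((p.1 : ℝ)) ((p.1 : ℝ) + (p.2 : ℝ)) = ∅ := by
        rw [Set.inter_comm]
        exact Set.not_nonempty_iff_eq_empty.mp hempty
      simp [hc, hemp]
    rw [h1, Finset.sum_product_right]
    exact Finset.sum_congr rfl key
  have hsub : (∑ p ∈ A.filter fun p => ¬ P p,
        (φ (y ((p.1 : ℝ) + (p.2 : ℝ)) - y (p.1 : ℝ)) - c p))
      = (∑ p ∈ A.filter fun p => ¬ P p, φ (y ((p.1 : ℝ) + (p.2 : ℝ)) - y (p.1 : ℝ)))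
        - (∑ p ∈ A.filter fun p => ¬ P p, c p) := Finset.sum_sub_distrib _ _
  show (∑ p ∈ A.filter fun p => ¬ P p, φ (y ((p.1 : ℝ) + (p.2 : ℝ)) - y (p.1 : ℝ)))
      + (∑ p ∈ A.filter P, c p)
      = (∑ p ∈ A.filter fun p => ¬ P p,
          (φ (y ((p.1 : ℝ) + (p.2 : ℝ)) - y (p.1 : ℝ)) - c p))
        + ∑ r ∈ Finset.Icc (1 : ℤ) (R : ℤ), ∫ x in Ωc, g r x
  rw [hsub]
  linarith [hsplit, hall]
end

section
/- In the 2D setting, for any deformation gradient F ∈ ℝ^{2×2}, any bond b = (i, i+r) contained in the continuum region, and any v ∈ P₁(T) (continuous piecewise affine on the triangulation), the variation of the continuum bond contribution c_b(y) := ⨍_b φ(D_r y) db at y = Fx equals ∇φ(Fr) · (v_{i+r} − v_i), which equals the variation of the exact contribution e_b(y) := φ(y_{i+r} − y_i). -/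
open MeasureTheory

/-- One-sided directional derivative `D_r f (x) = lim_{ε→0⁺} (f(x+εr) − f(x))/ε`. -/
noncomputable def Dr (r : ℝ × ℝ) (f : ℝ × ℝ → ℝ × ℝ) (x : ℝ × ℝ) : ℝ × ℝ :=
  derivWithin (fun s : ℝ => f (x + s • r)) (Set.Ioi (0 : ℝ)) 0

/-- In 2D, for any deformation gradient `F`, any bond `b = (i, i+r)` contained in the
continuum region, and any continuous test function `v` which is piecewise affine along the
bond (as a member of `P₁(T)` would be), the variation of the continuum bond contribution
`c_b(y) = ⨍_b φ(D_r y) db` at the uniform deformation `y = Fx` equals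
`∇φ(Fr)·(v_{i+r} − v_i)`, which in turn equals the variation of the exact contribution
`e_b(y) = φ(y_{i+r} − y_i)`. -/
theorem variation_continuum_eq_exact_2d
    (φ : ℝ × ℝ → ℝ) (hφ : ContDiff ℝ 1 φ) (F : (ℝ × ℝ) →ₗ[ℝ] (ℝ × ℝ))
    (i r : ℤ × ℤ) (hr : r ≠ 0)
    (v : ℝ × ℝ → ℝ × ℝ) (hv : Continuous v)
    (M : ℕ) (t : Fin (M + 1) → ℝ) (ht : StrictMono t)
    (ht0 : t 0 = 0) (ht1 : t (Fin.last M) = 1)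
    (haff : ∀ k : Fin M, ∃ a c : ℝ × ℝ,
      ∀ l ∈ Set.Icc (t k.castSucc) (t k.succ), v (c2 i + l • c2 r) = l • a + c) :
    HasDerivAt
        (fun s : ℝ => ∫ l in (0:ℝ)..1, φ (F (c2 r) + s • Dr (c2 r) v (c2 i + l • c2 r)))
        (fderiv ℝ φ (F (c2 r)) (v (c2 (i + r)) - v (c2 i))) 0
      ∧ HasDerivAt
        (fun s : ℝ => φ ((F (c2 (i + r)) + s • v (c2 (i + r))) - (F (c2 i) + s • v (c2 i))))
        (fderiv ℝ φ (F (c2 r)) (v (c2 (i + r)) - v (c2 i))) 0 := by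
  classical
  choose A C hAC using haff
  have hc2add : c2 (i + r) = c2 i + c2 r := by
    simp only [c2, Prod.mk_add_mk, Prod.ext_iff, Prod.fst_add, Prod.snd_add]
    push_cast
    exact ⟨rfl, rfl⟩
  have hφd : ∀ x : ℝ × ℝ, HasFDerivAt φ (fderiv ℝ φ x) x := fun x =>
    ((hφ.differentiable one_ne_zero) x).hasFDerivAt
  -- the sequence of breakpoints as a function on ℕ
  set a : ℕ → ℝ := fun k => if h : k ≤ M then t ⟨k, Nat.lt_succ_of_le h⟩ else 1 with ha
  have hak : ∀ k : ℕ, ∀ h : k < M, a k = t (Fin.castSucc ⟨k, h⟩) := by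
    intro k h
    simp [ha, h.le, Fin.castSucc]
  have haks : ∀ k : ℕ, ∀ h : k < M, a (k + 1) = t (Fin.succ ⟨k, h⟩) := by
    intro k h
    have h' : k + 1 ≤ M := h
    simp only [ha]
    rw [dif_pos h']
    rfl
  have ha0 : a 0 = 0 := by simpa [ha] using ht0
  have haM : a M = 1 := by simpa [ha, Fin.last] using ht1
  set A' : ℕ → ℝ × ℝ := fun k => if h : k < M then A ⟨k, h⟩ else 0 with hA'
  set p : ℝ → ℝ × ℝ := fun l => c2 i + l • c2 r with hp
  -- Dr of v along the bond is the local slope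
  have hDr : ∀ (k : Fin M), ∀ l ∈ Set.Ico (t k.castSucc) (t k.succ),
      Dr (c2 r) v (p l) = A k := by
    intro k l hl
    have hδ : 0 < t k.succ - l := by linarith [hl.2]
    have hlIcc : l ∈ Set.Icc (t k.castSucc) (t k.succ) := ⟨hl.1, hl.2.le⟩
    have hlin : HasDerivWithinAt (fun s : ℝ => (l + s) • A k + C k) (A k)
        (Set.Ioi (0 : ℝ)) 0 := by
      have := (((hasDerivAt_id (0 : ℝ)).const_add l).smul_const (A k)).add_const (C k)
      simpa using this.hasDerivWithinAt
    have hEq : HasDerivWithinAt (fun s : ℝ => v (p l + s • c2 r)) (A k)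
        (Set.Ioi (0 : ℝ)) 0 := by
      refine hlin.congr_of_eventuallyEq ?_ ?_
      · filter_upwards [Ioo_mem_nhdsGT_of_mem
          (Set.mem_Ico.2 ⟨le_refl (0 : ℝ), hδ⟩)] with s hs
        obtain ⟨hs1, hs2⟩ := hs
        have hpl : p l + s • c2 r = c2 i + (l + s) • c2 r := by
          simp only [hp, add_smul]; abel
        rw [hpl, hAC k]
        exact ⟨by linarith [hl.1], by linarith⟩
      · have : p l + (0 : ℝ) • c2 r = c2 i + l • c2 r := by simp [hp]
        rw [this, hAC k l hlIcc]
        simp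
    exact hEq.derivWithin (uniqueDiffWithinAt_Ioi 0)
  -- pointwise values at breakpoints
  have hvend : ∀ k : Fin M,
      (t k.succ - t k.castSucc) • A k = v (p (t k.succ)) - v (p (t k.castSucc)) := by
    intro k
    have h1 := hAC k (t k.castSucc) ⟨le_refl _, (ht (Fin.castSucc_lt_succ (i := k))).le⟩
    have h2 := hAC k (t k.succ) ⟨(ht (Fin.castSucc_lt_succ (i := k))).le, le_refl _⟩
    simp only [hp] at *
    rw [h1, h2, sub_smul]
    abel
  -- the integral is a finite sum of constants, for each s
  have hsum : ∀ s : ℝ,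
      (∫ l in (0:ℝ)..1, φ (F (c2 r) + s • Dr (c2 r) v (c2 i + l • c2 r)))
        = ∑ k ∈ Finset.range M, (a (k + 1) - a k) * φ (F (c2 r) + s • A' k) := by
    intro s
    set f : ℝ → ℝ := fun l => φ (F (c2 r) + s • Dr (c2 r) v (c2 i + l • c2 r)) with hf
    have hpiece : ∀ k < M, (∀ᵐ l : ℝ, l ∈ Set.uIoc (a k) (a (k + 1)) →
        f l = φ (F (c2 r) + s • A' k)) := by
      intro k hk
      have hne : ∀ᵐ l : ℝ, l ≠ a (k + 1) := by
        have : {l : ℝ | ¬ l ≠ a (k + 1)} = {a (k + 1)} := by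
          ext x; simp
        rw [ae_iff, this]
        exact measure_singleton _
      filter_upwards [hne] with l hl hmem
      have hle : a k ≤ a (k + 1) := by
        rw [hak k hk, haks k hk]
        exact (ht (Fin.castSucc_lt_succ (i := ⟨k, hk⟩))).le
      rw [Set.uIoc_of_le hle] at hmem
      have hIco : l ∈ Set.Ico (t (Fin.castSucc ⟨k, hk⟩)) (t (Fin.succ ⟨k, hk⟩)) := by
        constructor
        · rw [← hak k hk]; exact hmem.1.le
        · rw [← haks k hk]; exact lt_of_le_of_ne hmem.2 hl
      have := hDr ⟨k, hk⟩ l hIco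
      simp only [hf, hp] at this ⊢
      rw [this, hA']
      simp [hk]
    have hint : ∀ k < M, IntervalIntegrable f volume (a k) (a (k + 1)) := by
      intro k hk
      have hres : f =ᵐ[volume.restrict (Set.uIoc (a k) (a (k + 1)))]
          fun _ => φ (F (c2 r) + s • A' k) :=
        (ae_restrict_iff' measurableSet_uIoc).2 (hpiece k hk)
      exact (intervalIntegrable_const
        (c := φ (F (c2 r) + s • A' k))).congr_ae hres.symm
    have hsplit := intervalIntegral.sum_integral_adjacent_intervals (μ := volume)
      (f := f) (a := a) (n := M) hint
    rw [ha0, haM] at hsplit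
    rw [← hsplit]
    refine Finset.sum_congr rfl fun k hk => ?_
    have hk' := Finset.mem_range.mp hk
    rw [intervalIntegral.integral_congr_ae (hpiece k hk'),
      intervalIntegral.integral_const, smul_eq_mul]
  -- telescoping identity
  have htel : ∑ k ∈ Finset.range M, (a (k + 1) - a k) • A' k
      = v (c2 (i + r)) - v (c2 i) := by
    have : ∀ k ∈ Finset.range M, (a (k + 1) - a k) • A' k
        = v (p (a (k + 1))) - v (p (a k)) := by
      intro k hk
      have hk' := Finset.mem_range.mp hk
      rw [hak k hk', haks k hk', hA']
      simpa [hk'] using hvend ⟨k, hk'⟩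
    rw [Finset.sum_congr rfl this, Finset.sum_range_sub (fun n => v (p (a n))),
      ha0, haM]
    have h1 : p 1 = c2 (i + r) := by simp [hp, hc2add]
    have h0 : p 0 = c2 i := by simp [hp]
    rw [h1, h0]
  constructor
  · -- continuum part
    have hfun : (fun s : ℝ => ∫ l in (0:ℝ)..1,
        φ (F (c2 r) + s • Dr (c2 r) v (c2 i + l • c2 r)))
        = fun s : ℝ => ∑ k ∈ Finset.range M, (a (k + 1) - a k)
          * φ (F (c2 r) + s • A' k) := funext hsum
    rw [hfun]
    have hterm : ∀ k ∈ Finset.range M, HasDerivAt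
        (fun s : ℝ => (a (k + 1) - a k) * φ (F (c2 r) + s • A' k))
        ((a (k + 1) - a k) * fderiv ℝ φ (F (c2 r)) (A' k)) 0 := by
      intro k _
      have hinner : HasDerivAt (fun s : ℝ => F (c2 r) + s • A' k) (A' k) 0 := by
        simpa using ((hasDerivAt_id (0 : ℝ)).smul_const (A' k)).const_add (F (c2 r))
      have hl : HasFDerivAt φ (fderiv ℝ φ (F (c2 r)))
          ((fun s : ℝ => F (c2 r) + s • A' k) 0) := by
        simpa using hφd (F (c2 r))
      exact ((hl.comp_hasDerivAt 0 hinner).const_mul (a (k + 1) - a k))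
    have := HasDerivAt.fun_sum hterm
    have hD : ∑ k ∈ Finset.range M, (a (k + 1) - a k) * fderiv ℝ φ (F (c2 r)) (A' k)
        = fderiv ℝ φ (F (c2 r)) (v (c2 (i + r)) - v (c2 i)) := by
      rw [← htel, map_sum]
      refine Finset.sum_congr rfl fun k _ => ?_
      rw [(fderiv ℝ φ (F (c2 r))).map_smul, smul_eq_mul]
    rw [← hD]
    exact this
  · -- exact part
    have hkey : ∀ s : ℝ, (F (c2 (i + r)) + s • v (c2 (i + r)))
        - (F (c2 i) + s • v (c2 i))
        = F (c2 r) + s • (v (c2 (i + r)) - v (c2 i)) := by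
      intro s
      have : F (c2 (i + r)) = F (c2 i) + F (c2 r) := by rw [hc2add, map_add]
      rw [this, smul_sub]
      abel
    have hfun : (fun s : ℝ => φ ((F (c2 (i + r)) + s • v (c2 (i + r)))
        - (F (c2 i) + s • v (c2 i))))
        = fun s : ℝ => φ (F (c2 r) + s • (v (c2 (i + r)) - v (c2 i))) := by
      funext s; rw [hkey s]
    rw [hfun]
    have hinner : HasDerivAt (fun s : ℝ => F (c2 r) + s • (v (c2 (i + r)) - v (c2 i)))
        (v (c2 (i + r)) - v (c2 i)) 0 := by
      simpa using ((hasDerivAt_id (0 : ℝ)).smul_const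
        (v (c2 (i + r)) - v (c2 i))).const_add (F (c2 r))
    have hl : HasFDerivAt φ (fderiv ℝ φ (F (c2 r)))
        ((fun s : ℝ => F (c2 r) + s • (v (c2 (i + r)) - v (c2 i))) 0) := by
      simpa using hφd (F (c2 r))
    exact hl.comp_hasDerivAt 0 hinner
end
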